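/- In an idempotent residuated chain, if b is a negative element with b < b^{⋆⋆} (where x^⋆ = x^ℓ ∧ x^r), then every element c with b < c ≤ b^{⋆⋆} is central (commutes with every element). -/
import Mathlib


/-- `x^⋆ = x^ℓ ∧ x^r` in a residuated lattice with divisions `ld`, `rd`. -/
def lstar {A : Type*} [Lattice A] [One A] (ld rd : A → A → A) (x : A) : A :=
  rd 1 x ⊓ ld x 1

/-- In an idempotent residuated chain, if `b` is negative and `b < b^{⋆⋆}`, then
every `c` with `b < c ≤ b^{⋆⋆}` is central. -/
theorem stmt15 {A : Type*} [LinearOrder A] [Monoid A]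
    (ld rd : A → A → A)
    (resl : ∀ x y z : A, x * y ≤ z ↔ y ≤ ld x z)
    (resr : ∀ x y z : A, x * y ≤ z ↔ x ≤ rd z y)
    (idem : ∀ x : A, x * x = x) :
    ∀ b : A, b ≤ 1 → b < lstar ld rd (lstar ld rd b) →
      ∀ c : A, b < c → c ≤ lstar ld rd (lstar ld rd b) →
        ∀ y : A, c * y = y * c := by
  -- monotonicity of multiplication
  have mulr : ∀ x : A, ∀ {a b : A}, a ≤ b → x * a ≤ x * b := by
    intro x a b h
    exact (resl x a (x*b)).2 (h.trans ((resl x b (x*b)).1 le_rfl))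
  have mull : ∀ y : A, ∀ {a b : A}, a ≤ b → a * y ≤ b * y := by
    intro y a b h
    exact (resr a y (b*y)).2 (h.trans ((resr b y (b*y)).1 le_rfl))
  -- products of negatives
  have negmul : ∀ {u v : A}, u ≤ v → v ≤ 1 → v * u = u ∧ u * v = u := by
    intro u v huv hv1
    constructor
    · refine le_antisymm ?_ ?_
      · calc v * u ≤ 1 * u := mull u hv1
          _ = u := one_mul u
      · calc u = u * u := (idem u).symm
          _ ≤ v * u := mull u huv
    · refine le_antisymm ?_ ?_
      · calc u * v ≤ u * 1 := mulr u hv1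
          _ = u := mul_one u
      · calc u = u * u := (idem u).symm
          _ ≤ u * v := mulr u huv
  -- conservativity: negative times positive
  have consC : ∀ x y : A, x ≤ 1 → 1 ≤ y → x * y = x ∨ x * y = y := by
    intro x y hx hy
    rcases le_total (x*y) 1 with h | h
    · left
      have h1 : x * (x*y) = x*y := by rw [← mul_assoc, idem]
      have h2 : x * (x*y) ≤ x * 1 := mulr x h
      rw [h1, mul_one] at h2
      refine le_antisymm h2 ?_
      calc x = x * 1 := (mul_one x).symm
        _ ≤ x * y := mulr x hy
    · right
      have h1 : (x*y) * y = x*y := by rw [mul_assoc, idem]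
      have h2 : 1 * y ≤ (x*y) * y := mull y h
      rw [h1, one_mul] at h2
      refine le_antisymm ?_ h2
      calc x * y ≤ 1 * y := mull y hx
        _ = y := one_mul y
  have consC' : ∀ x y : A, x ≤ 1 → 1 ≤ y → y * x = x ∨ y * x = y := by
    intro x y hx hy
    rcases le_total (y*x) 1 with h | h
    · left
      have h1 : (y*x) * x = y*x := by rw [mul_assoc, idem]
      have h2 : (y*x) * x ≤ 1 * x := mull x h
      rw [h1, one_mul] at h2
      refine le_antisymm h2 ?_
      calc x = 1 * x := (one_mul x).symm
        _ ≤ y * x := mull x hy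
    · right
      have h1 : y * (y*x) = y*x := by rw [← mul_assoc, idem]
      have h2 : y * 1 ≤ y * (y*x) := mulr y h
      rw [h1, mul_one] at h2
      refine le_antisymm ?_ h2
      calc y * x ≤ y * 1 := mulr y hx
        _ = y := mul_one y
  -- x ≤ x^{⋆⋆}
  have selfle : ∀ x : A, x ≤ lstar ld rd (lstar ld rd x) := by
    intro x
    have h1 : lstar ld rd x * x ≤ 1 := by
      calc lstar ld rd x * x ≤ rd 1 x * x := mull x inf_le_left
        _ ≤ 1 := (resr (rd 1 x) x 1).2 le_rfl
    have h2 : x * lstar ld rd x ≤ 1 := by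
      calc x * lstar ld rd x ≤ x * ld x 1 := mulr x inf_le_right
        _ ≤ 1 := (resl x (ld x 1) 1).2 le_rfl
    exact le_inf ((resr x (lstar ld rd x) 1).1 h2) ((resl (lstar ld rd x) x 1).1 h1)
  -- ⋆ is antitone
  have anti : ∀ {x y : A}, x ≤ y → lstar ld rd y ≤ lstar ld rd x := by
    intro x y h
    refine le_inf (inf_le_left.trans ?_) (inf_le_right.trans ?_)
    · refine (resr (rd 1 y) x 1).1 ?_
      calc rd 1 y * x ≤ rd 1 y * y := mulr _ h
        _ ≤ 1 := (resr (rd 1 y) y 1).2 le_rfl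
    · refine (resl x (ld y 1) 1).1 ?_
      calc x * ld y 1 ≤ y * ld y 1 := mull _ h
        _ ≤ 1 := (resl y (ld y 1) 1).2 le_rfl
  intro b hb1 _hlt c hbc hcle y
  -- positivity of b^⋆, negativity of b^{⋆⋆}
  have hposb : (1:A) ≤ lstar ld rd b :=
    le_inf ((resr 1 b 1).1 (by rw [one_mul]; exact hb1))
      ((resl b 1 1).1 (by rw [mul_one]; exact hb1))
  have hss1 : lstar ld rd (lstar ld rd b) ≤ 1 := by
    refine inf_le_left.trans ?_
    calc rd 1 (lstar ld rd b) = rd 1 (lstar ld rd b) * 1 := (mul_one _).symm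
      _ ≤ rd 1 (lstar ld rd b) * lstar ld rd b := mulr _ hposb
      _ ≤ 1 := (resr _ _ 1).2 le_rfl
  have hc1 : c ≤ 1 := hcle.trans hss1
  -- b^⋆ = c^⋆
  have hstareq : lstar ld rd b = lstar ld rd c := by
    refine le_antisymm ?_ (anti hbc.le)
    calc lstar ld rd b ≤ lstar ld rd (lstar ld rd (lstar ld rd b)) := selfle _
      _ ≤ lstar ld rd c := anti hcle
  -- notation: e = c^ℓ, f = c^r
  have he1 : (1:A) ≤ rd 1 c := (resr 1 c 1).1 (by rw [one_mul]; exact hc1)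
  have hf1 : (1:A) ≤ ld c 1 := (resl c 1 1).1 (by rw [mul_one]; exact hc1)
  have hcb : c * b = b := (negmul hbc.le hc1).1
  have hbcm : b * c = b := (negmul hbc.le hc1).2
  -- key step : c^ℓ = c^r
  have hef : rd 1 c = ld c 1 := by
    rcases lt_trichotomy (rd 1 c) (ld c 1) with h | h | h
    · -- e < f : contradiction
      exfalso
      set f := ld c 1 with hfdef
      have hcf : c * f = c := by
        have hle : c * f ≤ 1 := (resl c f 1).2 le_rfl
        rcases consC c f hc1 hf1 with h' | h'
        · exact h'
        · exfalso
          have : f ≤ 1 := by rw [← h']; exact hle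
          exact absurd (lt_of_le_of_lt he1 h) (not_lt.2 this)
      have hfb : f * b = f := by
        rcases consC' b f hb1 hf1 with h' | h'
        · exfalso
          have hfb1 : f * b ≤ 1 := by rw [h']; exact hb1
          have h1 : f ≤ rd 1 b := (resr f b 1).1 hfb1
          have h2 : f ≤ ld b 1 := by
            refine (resl b f 1).1 ?_
            calc b * f ≤ c * f := mull f hbc.le
              _ = c := hcf
              _ ≤ 1 := hc1
          have : f ≤ lstar ld rd b := le_inf h1 h2
          rw [hstareq] at this
          exact absurd (this.trans inf_le_left) (not_le.2 h)
        · exact h'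
      have : b = c := by
        calc b = c * b := hcb.symm
          _ = (c * f) * b := by rw [hcf]
          _ = c * (f * b) := mul_assoc c f b
          _ = c * f := by rw [hfb]
          _ = c := hcf
      exact absurd this hbc.ne
    · exact h
    · -- f < e : contradiction
      exfalso
      set e := rd 1 c with hedef
      have hec : e * c = c := by
        have hle : e * c ≤ 1 := (resr e c 1).2 le_rfl
        rcases consC' c e hc1 he1 with h' | h'
        · exact h'
        · exfalso
          have : e ≤ 1 := by rw [← h']; exact hle
          exact absurd (lt_of_le_of_lt hf1 h) (not_lt.2 this)
      have hbe : b * e = e := by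
        rcases consC b e hb1 he1 with h' | h'
        · exfalso
          have hbe1 : b * e ≤ 1 := by rw [h']; exact hb1
          have h2 : e ≤ ld b 1 := (resl b e 1).1 hbe1
          have h1 : e ≤ rd 1 b := by
            refine (resr e b 1).1 ?_
            calc e * b ≤ e * c := mulr e hbc.le
              _ = c := hec
              _ ≤ 1 := hc1
          have : e ≤ lstar ld rd b := le_inf h1 h2
          rw [hstareq] at this
          exact absurd (this.trans inf_le_right) (not_le.2 h)
        · exact h'
      have : b = c := by
        calc b = b * c := hbcm.symm
          _ = b * (e * c) := by rw [hec]
          _ = (b * e) * c := (mul_assoc b e c).symm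
          _ = e * c := by rw [hbe]
          _ = c := hec
      exact absurd this hbc.ne
  -- now prove centrality
  rcases le_total y 1 with hy1 | hy1
  · rcases le_total y c with hyc | hyc
    · rw [(negmul hyc hc1).1, (negmul hyc hc1).2]
    · rw [(negmul hyc hy1).2, (negmul hyc hy1).1]
  · rcases eq_or_lt_of_le hy1 with rfl | hy1'
    · rw [one_mul, mul_one]
    · rcases le_or_gt y (rd 1 c) with hyd | hyd
      · -- y ≤ e = f : both products are c
        have h1 : y * c ≤ 1 := (resr y c 1).2 hyd
        have h2 : c * y ≤ 1 := (resl c y 1).2 (hef ▸ hyd)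
        have e1 : c * y = c := by
          rcases consC c y hc1 hy1 with h' | h'
          · exact h'
          · exact absurd (h' ▸ h2 : y ≤ 1) (not_le.2 hy1')
        have e2 : y * c = c := by
          rcases consC' c y hc1 hy1 with h' | h'
          · exact h'
          · exact absurd (h' ▸ h1 : y ≤ 1) (not_le.2 hy1')
        rw [e1, e2]
      · -- e = f < y : both products are y
        have e1 : c * y = y := by
          rcases consC c y hc1 hy1 with h' | h'
          · exfalso
            have : c * y ≤ 1 := by rw [h']; exact hc1
            have : y ≤ ld c 1 := (resl c y 1).1 this
            exact absurd (this.trans_lt (hef ▸ hyd)) (lt_irrefl _)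
          · exact h'
        have e2 : y * c = y := by
          rcases consC' c y hc1 hy1 with h' | h'
          · exfalso
            have : y * c ≤ 1 := by rw [h']; exact hc1
            have : y ≤ rd 1 c := (resr y c 1).1 this
            exact absurd (this.trans_lt hyd) (lt_irrefl _)
          · exact h'
        rw [e1, e2]
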